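/- Let E be a Hausdorff topological group, A ⊂ E a finite central subgroup of order m, p a prime with p ∤ m, and suppose x, x' ∈ E both satisfy lim_{k→∞} x^{p^k} = 1 (topological unipotence) and x' = a·x for some a ∈ A. Then a = 1, i.e. x' = x. Moreover, if x is topologically unipotent and g ∈ E commutes with the image of x in E/A (i.e. [g, x] ∈ A), then [g, x] = 1. -/

import Mathlib

open Filter

/-- If `a` lies in a finite subgroup `A` of a T2 group, `p` is prime not dividing
`Nat.card A`, and `a ^ (p ^ k) → 1`, then `a = 1`. -/
lemma key_18 {E : Type*} [Group E] [TopologicalSpace E] [T2Space E]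
    (A : Subgroup E) [Finite A] (m p : ℕ) (hm : Nat.card A = m) (hp : p.Prime)
    (hpm : ¬ p ∣ m) (a : E) (ha : a ∈ A)
    (h : Tendsto (fun k : ℕ => a ^ (p ^ k)) atTop (nhds 1)) : a = 1 := by
  have hAfin : (A : Set E).Finite := Set.toFinite _
  have hS : IsClosed ((A : Set E) \ {1}) := (hAfin.subset Set.diff_subset).isClosed
  have hU : (((A : Set E) \ {1})ᶜ) ∈ nhds (1 : E) :=
    hS.isOpen_compl.mem_nhds (by simp)
  obtain ⟨k, hk⟩ := (h.eventually (eventually_of_mem hU (fun y hy => hy))).exists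
  have hmem : a ^ (p ^ k) ∈ A := A.pow_mem ha _
  have h1 : a ^ (p ^ k) = 1 := by
    by_contra hne
    exact hk ⟨hmem, hne⟩
  have hd1 : orderOf a ∣ p ^ k := orderOf_dvd_of_pow_eq_one h1
  have hd2 : orderOf a ∣ m := by
    have : orderOf (⟨a, ha⟩ : A) ∣ Nat.card A := orderOf_dvd_natCard _
    rwa [Subgroup.orderOf_mk, hm] at this
  have hcop : (p ^ k).Coprime m :=
    Nat.Coprime.pow_left _ ((Nat.Prime.coprime_iff_not_dvd hp).mpr hpm)
  have : orderOf a ∣ Nat.gcd (p ^ k) m := Nat.dvd_gcd hd1 hd2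
  rw [Nat.Coprime.gcd_eq_one hcop, Nat.dvd_one] at this
  exact orderOf_eq_one_iff.mp this

/-- Uniqueness of topologically unipotent lifts modulo a finite central subgroup of order
prime to `p`, and triviality of central commutators with topologically unipotent elements. -/
theorem stmt_18 {E : Type*} [Group E] [TopologicalSpace E] [IsTopologicalGroup E] [T2Space E]
    (A : Subgroup E) (hA : A ≤ Subgroup.center E) [Finite A]
    (m : ℕ) (hm : Nat.card A = m)
    (p : ℕ) (hp : p.Prime) (hpm : ¬ p ∣ m) :
    (∀ x x' : E,
      Filter.Tendsto (fun k : ℕ => x ^ (p ^ k)) Filter.atTop (nhds 1) →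
      Filter.Tendsto (fun k : ℕ => x' ^ (p ^ k)) Filter.atTop (nhds 1) →
      ∀ a ∈ A, x' = a * x → a = 1) ∧
    (∀ x g : E,
      Filter.Tendsto (fun k : ℕ => x ^ (p ^ k)) Filter.atTop (nhds 1) →
      g * x * g⁻¹ * x⁻¹ ∈ A → g * x * g⁻¹ * x⁻¹ = 1) := by
  constructor
  · intro x x' hx hx' a haA hxa
    have hac : ∀ y : E, a * y = y * a := fun y =>
      ((Subgroup.mem_center_iff.mp (hA haA) y)).symm
    have hpow : ∀ n : ℕ, x' ^ n = a ^ n * x ^ n := fun n => by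
      rw [hxa, (show Commute a x from hac x).mul_pow]
    have ht : Tendsto (fun k : ℕ => a ^ (p ^ k)) atTop (nhds 1) := by
      have : Tendsto (fun k : ℕ => x' ^ (p ^ k) * (x ^ (p ^ k))⁻¹) atTop
          (nhds (1 * (1 : E)⁻¹)) := hx'.mul hx.inv
      simp only [mul_one, inv_one, mul_inv_cancel, one_mul] at this
      convert this using 2 with k
      rw [hpow, mul_assoc, mul_inv_cancel, mul_one]
    exact key_18 A m p hm hp hpm a haA ht
  · intro x g hx hcA
    set c := g * x * g⁻¹ * x⁻¹ with hc
    have hcc : ∀ y : E, c * y = y * c := fun y =>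
      ((Subgroup.mem_center_iff.mp (hA hcA) y)).symm
    have hconj : g * x * g⁻¹ = c * x := by
      rw [hc]; group
    have hpow : ∀ n : ℕ, g * x ^ n * g⁻¹ * (x ^ n)⁻¹ = c ^ n := fun n => by
      have h1 : g * x ^ n * g⁻¹ = (g * x * g⁻¹) ^ n := by
        rw [conj_pow]
      rw [h1, hconj, (show Commute c x from hcc x).mul_pow, mul_assoc,
        mul_inv_cancel, mul_one]
    have ht : Tendsto (fun k : ℕ => c ^ (p ^ k)) atTop (nhds 1) := by
      have : Tendsto (fun k : ℕ => g * x ^ (p ^ k) * g⁻¹ * (x ^ (p ^ k))⁻¹) atTop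
          (nhds (g * 1 * g⁻¹ * (1 : E)⁻¹)) := by
        exact (((tendsto_const_nhds.mul hx).mul tendsto_const_nhds).mul hx.inv)
      simp only [mul_one, inv_one, mul_inv_cancel] at this
      convert this using 2 with k
      rw [hpow]
    exact key_18 A m p hm hp hpm c hcA ht
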